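/- Let H_{a|x}(q) = log₂( 2^{μ_x} α_{a,x} / Π_y [ Σ_{x̃} P_X(x̃) P_{Y|X,A}(y|x̃,a) 2^{q_{a|x̃}} ]^{P_{Y|X,A}(y|x,a)} ) for q ∈ ℝ^{𝒜×𝒳}. Then every partial derivative satisfies ∂H_{ã|x̃}/∂q_{a'|x'} = − 1{ã = a'} Σ_y P_{Y|X,A}(y|x̃,ã) · P_X(x') P_{Y|X,A}(y|x',a') 2^{q_{a'|x'}} / ( Σ_x P_X(x) P_{Y|X,A}(y|x,ã) 2^{q_{ã|x}} ) ≤ 0, the diagonal partial derivative ∂H_{ã|x̃}/∂q_{ã|x̃} is strictly negative, and for every (ã, x̃), Σ_{a', x'} ∂H_{ã|x̃}/∂q_{a'|x'} = −1. -/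

import Mathlib

open Finset

noncomputable section

/-- A probability mass function on a finite alphabet. -/
def IsPMF {α : Type} [Fintype α] (p : α → ℝ) : Prop :=
  (∀ a, 0 ≤ p a) ∧ ∑ a, p a = 1

variable {X Y A : Type} [Fintype X] [Fintype Y] [Fintype A]
  [DecidableEq X] [DecidableEq Y] [DecidableEq A]

/-- The map `H_{a|x}(q) = log₂( 2^{μ_x} α_{a,x} /
Π_y [ Σ_x̃ P_X(x̃) P_{Y|X,A}(y|x̃,a) 2^{q_{a|x̃}} ]^{P_{Y|X,A}(y|x,a)} )`. -/
def Hfun (PX : X → ℝ) (PW : A → X → Y → ℝ) (μ : X → ℝ) (α : A → X → ℝ)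
    (q : A × X → ℝ) (a : A) (x : X) : ℝ :=
  Real.logb 2 ((2 : ℝ) ^ (μ x) * α a x /
    ∏ y, (∑ xt, PX xt * PW a xt y * (2 : ℝ) ^ (q (a, xt))) ^ (PW a x y))

/-- The claimed partial derivative `∂H_{ã|x̃}/∂q_{a'|x'}`. -/
def Hpd (PX : X → ℝ) (PW : A → X → Y → ℝ) (q : A × X → ℝ)
    (at' : A) (xt' : X) (a' : A) (x' : X) : ℝ :=
  -(if at' = a' then (1 : ℝ) else 0) * ∑ y, PW at' xt' y *
    (PX x' * PW a' x' y * (2 : ℝ) ^ (q (a', x')) /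
      (∑ x, PX x * PW at' x y * (2 : ℝ) ^ (q (at', x))))
-- helper: logb of rpow for nonneg base
lemma logb_rpow_nonneg {S w : ℝ} (hS : 0 ≤ S) :
    Real.logb 2 (S ^ w) = w * Real.logb 2 S := by
  rcases hS.lt_or_eq with h | h
  · exact Real.logb_rpow_eq_mul_logb_of_pos h
  · rcases eq_or_ne w 0 with hw | hw
    · simp [← h, hw]
    · simp [← h, Real.zero_rpow hw]

/-- The partial derivatives of `H` are given by the stated formula and
are nonpositive; the diagonal partial derivative is strictly negative; and each row of
partial derivatives sums to `−1`. -/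
theorem Hfun_partial_derivatives
    {X Y A : Type} [Fintype X] [Fintype Y] [Fintype A]
    [DecidableEq X] [DecidableEq Y] [DecidableEq A]
    [Nonempty X] [Nonempty Y] [Nonempty A]
    (PX : X → ℝ) (PW : A → X → Y → ℝ) (μ : X → ℝ) (α : A → X → ℝ)
    (hPX : IsPMF PX) (hPXpos : ∀ x, 0 < PX x)
    (hPW : ∀ a x, IsPMF (PW a x))
    (hα : ∀ a x, 0 < α a x) :
    (∀ (q : A × X → ℝ) (at' : A) (xt' : X) (a' : A) (x' : X),
      HasDerivAt
        (fun u : ℝ => Hfun PX PW μ α (Function.update q (a', x') u) at' xt')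
        (Hpd PX PW q at' xt' a' x') (q (a', x')) ∧
      Hpd PX PW q at' xt' a' x' ≤ 0) ∧
    (∀ (q : A × X → ℝ) (at' : A) (xt' : X), Hpd PX PW q at' xt' at' xt' < 0) ∧
    (∀ (q : A × X → ℝ) (at' : A) (xt' : X),
      ∑ a', ∑ x', Hpd PX PW q at' xt' a' x' = -1) := by
  -- basic facts
  have hPWnn : ∀ a x y, 0 ≤ PW a x y := fun a x y => (hPW a x).1 y
  -- S q a y : the partition sum
  set S : (A × X → ℝ) → A → Y → ℝ :=
    fun q a y => ∑ x, PX x * PW a x y * (2 : ℝ) ^ (q (a, x)) with hS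
  have hSnn : ∀ q a y, 0 ≤ S q a y := by
    intro q a y
    exact Finset.sum_nonneg fun x _ =>
      mul_nonneg (mul_nonneg (hPXpos x).le (hPWnn a x y)) (Real.rpow_pos_of_pos two_pos _).le
  have hSpos : ∀ q a y x, 0 < PW a x y → 0 < S q a y := by
    intro q a y x hx
    refine Finset.sum_pos' (fun x _ => mul_nonneg (mul_nonneg (hPXpos x).le (hPWnn a x y))
      (Real.rpow_pos_of_pos two_pos _).le) ⟨x, Finset.mem_univ x, ?_⟩
    exact mul_pos (mul_pos (hPXpos x) hx) (Real.rpow_pos_of_pos two_pos _)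
  -- Hpd nonpositivity
  have hterm_nn : ∀ (q : A × X → ℝ) (at' : A) (xt' : X) (a' : A) (x' : X) (y : Y),
      0 ≤ PW at' xt' y * (PX x' * PW a' x' y * (2 : ℝ) ^ (q (a', x')) / S q at' y) := by
    intro q at' xt' a' x' y
    exact mul_nonneg (hPWnn _ _ _) (div_nonneg (mul_nonneg (mul_nonneg (hPXpos _).le
      (hPWnn _ _ _)) (Real.rpow_pos_of_pos two_pos _).le) (hSnn q at' y))
  have hpd_le : ∀ (q : A × X → ℝ) (at' : A) (xt' : X) (a' : A) (x' : X),
      Hpd PX PW q at' xt' a' x' ≤ 0 := by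
    intro q at' xt' a' x'
    rw [Hpd, neg_mul, neg_nonpos]
    refine mul_nonneg ?_ (Finset.sum_nonneg fun y _ => hterm_nn q at' xt' a' x' y)
    split <;> norm_num
  -- Hfun rewritten as a difference
  have hHfun : ∀ (q : A × X → ℝ) (a : A) (x : X),
      Hfun PX PW μ α q a x = Real.logb 2 ((2 : ℝ) ^ (μ x) * α a x)
        - ∑ y, PW a x y * Real.logb 2 (S q a y) := by
    intro q a x
    rw [Hfun]
    have hD : ∀ y : Y, (0:ℝ) < (S q a y) ^ (PW a x y) := by
      intro y
      rcases eq_or_lt_of_le (hPWnn a x y) with h | h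
      · rw [← h, Real.rpow_zero]; norm_num
      · exact Real.rpow_pos_of_pos (hSpos q a y x h) _
    rw [Real.logb_div (mul_pos (Real.rpow_pos_of_pos two_pos _) (hα a x)).ne'
      (Finset.prod_pos (fun y _ => hD y)).ne']
    congr 1
    rw [Real.logb_prod _ _ (fun y _ => (hD y).ne')]
    exact Finset.sum_congr rfl fun y _ => logb_rpow_nonneg (hSnn q a y)
  -- the derivative statement
  have hderiv : ∀ (q : A × X → ℝ) (at' : A) (xt' : X) (a' : A) (x' : X),
      HasDerivAt
        (fun u : ℝ => Hfun PX PW μ α (Function.update q (a', x') u) at' xt')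
        (Hpd PX PW q at' xt' a' x') (q (a', x')) := by
    intro q at' xt' a' x'
    rcases eq_or_ne at' a' with rfl | hne
    swap
    · -- off-diagonal: constant function, derivative zero
      have hfun : (fun u : ℝ => Hfun PX PW μ α (Function.update q (a', x') u) at' xt')
          = fun _ => Hfun PX PW μ α q at' xt' := by
        funext u
        have : ∀ xt : X, Function.update q (a', x') u (at', xt) = q (at', xt) := by
          intro xt
          apply Function.update_of_ne
          simp [Prod.ext_iff, hne]
        simp only [Hfun, this]
      have hpd0 : Hpd PX PW q at' xt' a' x' = 0 := by
        simp [Hpd, hne]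
      rw [hfun, hpd0]
      exact hasDerivAt_const _ _
    · -- diagonal a': at' = a'
      set u₀ := q (at', x') with hu₀
      -- f y u = S (update q (at',x') u) at' y
      have hfy : ∀ y (u : ℝ), S (Function.update q (at', x') u) at' y
          = ∑ xt, PX xt * PW at' xt y *
              (2 : ℝ) ^ (if xt = x' then u else q (at', xt)) := by
        intro y u
        refine Finset.sum_congr rfl fun xt _ => ?_
        congr 2
        rcases eq_or_ne xt x' with rfl | hxt
        · simp
        · rw [Function.update_of_ne (by simp [hxt]), if_neg hxt]
      -- derivative of f y
      have hfd : ∀ y (u : ℝ), HasDerivAt (fun u => S (Function.update q (at', x') u) at' y)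
          (PX x' * PW at' x' y * ((2:ℝ) ^ u * Real.log 2)) u := by
        intro y u
        have := HasDerivAt.fun_sum (u := Finset.univ) (x := u)
          (A := fun (xt : X) (u : ℝ) => PX xt * PW at' xt y * (2:ℝ) ^ (if xt = x' then u else q (at', xt)))
          (A' := fun xt => if xt = x' then PX x' * PW at' x' y * ((2:ℝ) ^ u * Real.log 2) else 0)
          ?_
        · have h2 : (fun u : ℝ => S (Function.update q (at', x') u) at' y)
              = fun u => ∑ xt, PX xt * PW at' xt y * (2:ℝ) ^ (if xt = x' then u else q (at', xt)) := by
            funext u; exact hfy y u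
          rw [h2]
          refine this.congr_deriv ?_
          rw [Finset.sum_ite_eq' Finset.univ x']
          simp
        · intro xt _
          rcases eq_or_ne xt x' with rfl | hxt
          · simp only [if_pos rfl]
            exact ((Real.hasStrictDerivAt_const_rpow two_pos u).hasDerivAt).const_mul _
          · simp only [if_neg hxt]
            exact hasDerivAt_const _ _
      -- positivity of f along the path
      have hfpos : ∀ y, PW at' xt' y ≠ 0 → ∀ u : ℝ,
          0 < S (Function.update q (at', x') u) at' y := by
        intro y hy u
        exact hSpos _ at' y xt' (lt_of_le_of_ne (hPWnn _ _ _) (Ne.symm hy))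
      -- rewrite the target function
      have hfun : (fun u : ℝ => Hfun PX PW μ α (Function.update q (at', x') u) at' xt')
          = fun u => Real.logb 2 ((2 : ℝ) ^ (μ xt') * α at' xt')
            - ∑ y, PW at' xt' y * Real.logb 2 (S (Function.update q (at', x') u) at' y) := by
        funext u; exact hHfun _ at' xt'
      rw [hfun]
      have hself : Function.update q (at', x') u₀ = q := Function.update_eq_self _ _
      -- derivative of each summand
      have hsum : HasDerivAt (fun u => ∑ y, PW at' xt' y *
            Real.logb 2 (S (Function.update q (at', x') u) at' y))
          (∑ y, PW at' xt' y * (PX x' * PW at' x' y * (2:ℝ) ^ u₀ / S q at' y)) u₀ := by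
        refine HasDerivAt.fun_sum fun y _ => ?_
        rcases eq_or_ne (PW at' xt' y) 0 with hy | hy
        · have : (fun u : ℝ => PW at' xt' y *
              Real.logb 2 (S (Function.update q (at', x') u) at' y)) = fun _ => 0 := by
            funext u; rw [hy, zero_mul]
          rw [this, hy, zero_mul]
          exact hasDerivAt_const _ _
        · have hS0 : S q at' y ≠ 0 := by
            have := hfpos y hy u₀; rw [hself] at this; exact this.ne'
          have hlog : HasDerivAt (fun u => Real.log (S (Function.update q (at', x') u) at' y))
              (PX x' * PW at' x' y * ((2:ℝ) ^ u₀ * Real.log 2) / S q at' y) u₀ := by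
            have h := (hfd y u₀).log (by rw [hself]; exact fun h => hS0 h)
            rw [hself] at h
            exact h
          have hc := (hlog.div_const (Real.log 2)).const_mul (PW at' xt' y)
          have h2 : Real.log 2 ≠ 0 :=
            Real.log_ne_zero_of_pos_of_ne_one two_pos (by norm_num)
          refine hc.congr_deriv ?_
          congr 1
          field_simp
      have hC := ((hasDerivAt_const u₀ (Real.logb 2 ((2 : ℝ) ^ (μ xt') * α at' xt')))).sub hsum
      refine hC.congr_deriv ?_
      rw [Hpd, if_pos rfl, hS]
      ring
  refine ⟨fun q at' xt' a' x' => ⟨hderiv q at' xt' a' x', hpd_le q at' xt' a' x'⟩, ?_, ?_⟩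
  · -- strict negativity on diagonal
    intro q at' xt'
    rw [Hpd, if_pos rfl, neg_mul, one_mul, neg_neg_iff_pos]
    obtain ⟨y₀, _, hy₀⟩ : ∃ y ∈ Finset.univ, PW at' xt' y ≠ 0 :=
      Finset.exists_ne_zero_of_sum_ne_zero (by rw [(hPW at' xt').2]; norm_num)
    have hy₀pos : 0 < PW at' xt' y₀ := lt_of_le_of_ne (hPWnn _ _ _) (Ne.symm hy₀)
    refine Finset.sum_pos' (fun y _ => hterm_nn q at' xt' at' xt' y) ⟨y₀, Finset.mem_univ y₀, ?_⟩
    exact mul_pos hy₀pos (div_pos (mul_pos (mul_pos (hPXpos _) hy₀pos)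
      (Real.rpow_pos_of_pos two_pos _)) (hSpos q at' y₀ xt' hy₀pos))
  · -- row sums equal -1
    intro q at' xt'
    rw [Finset.sum_eq_single at']
    · have h1 : ∀ x' : X, Hpd PX PW q at' xt' at' x' =
          -∑ y, PW at' xt' y * (PX x' * PW at' x' y * (2 : ℝ) ^ (q (at', x')) / S q at' y) := by
        intro x'; rw [Hpd, if_pos rfl, neg_mul, one_mul]
      rw [Finset.sum_congr rfl (fun x' _ => h1 x'), Finset.sum_neg_distrib, Finset.sum_comm]
      have h2 : ∀ y : Y, (∑ x' : X, PW at' xt' y *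
          (PX x' * PW at' x' y * (2 : ℝ) ^ (q (at', x')) / S q at' y)) = PW at' xt' y := by
        intro y
        rcases eq_or_ne (PW at' xt' y) 0 with hy | hy
        · simp [hy]
        · have hpos := hSpos q at' y xt' (lt_of_le_of_ne (hPWnn _ _ _) (Ne.symm hy))
          rw [← Finset.mul_sum, ← Finset.sum_div]
          rw [show (∑ x' : X, PX x' * PW at' x' y * (2 : ℝ) ^ (q (at', x'))) = S q at' y from rfl]
          rw [div_self hpos.ne', mul_one]
      rw [Finset.sum_congr rfl (fun y _ => h2 y), (hPW at' xt').2]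
    · intro b _ hb
      refine Finset.sum_eq_zero fun x' _ => ?_
      rw [Hpd, if_neg (Ne.symm hb), neg_zero, zero_mul]
    · intro h; exact absurd (Finset.mem_univ at') h

end
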